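/- Let H be a Hopf algebra over a commutative integral domain R, Π a finite group of weights, Σ_Π their sum, and h ∈ H skew-primitive with Δ(h) = g ⊗ h + h ⊗ g'. Then for every λ ∈ Π: (λ(g) - λ(g'))·Σ_Π(h) = λ(h)·(Σ_Π(g) - Σ_Π(g')). -/

import Mathlib

open TensorProduct

/-- Convolution of two `R`-linear functionals on a bialgebra. -/
noncomputable def conv {R H : Type*} [CommSemiring R] [Semiring H] [Bialgebra R H]
    (f g : H →ₗ[R] R) : H →ₗ[R] R :=
  LinearMap.mul' R R ∘ₗ TensorProduct.map f g ∘ₗ Coalgebra.comul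

section ConvLemmas

variable {R H : Type*} [CommSemiring R] [Semiring H] [Bialgebra R H]

lemma conv_apply' (f g : H →ₗ[R] R) (x : H) :
    conv f g x = LinearMap.mul' R R (TensorProduct.map f g (Coalgebra.comul x)) := rfl

lemma conv_assoc (f g k : H →ₗ[R] R) : conv (conv f g) k = conv f (conv g k) := by
  ext x
  have key : ∀ y : (H ⊗[R] H) ⊗[R] H,
      LinearMap.mul' R R (TensorProduct.map (LinearMap.mul' R R ∘ₗ TensorProduct.map f g) k y) =
      LinearMap.mul' R R (TensorProduct.map f (LinearMap.mul' R R ∘ₗ TensorProduct.map g k)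
        (TensorProduct.assoc R H H H y)) := by
    intro y
    induction y using TensorProduct.induction_on with
    | zero => simp
    | tmul s c =>
      induction s using TensorProduct.induction_on with
      | zero => simp
      | tmul a b => simp [mul_assoc]
      | add u v hu hv => simp_all [add_tmul]
    | add u v hu hv => simp_all
  have e1 : ∀ t : H ⊗[R] H,
      LinearMap.mul' R R (TensorProduct.map (conv f g) k t) =
      LinearMap.mul' R R (TensorProduct.map (LinearMap.mul' R R ∘ₗ TensorProduct.map f g) k
        ((Coalgebra.comul (R := R) (A := H)).rTensor H t)) := by
    intro t
    induction t using TensorProduct.induction_on with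
    | zero => simp
    | tmul a b => simp [conv_apply']
    | add u v hu hv => simp_all
  have e2 : ∀ t : H ⊗[R] H,
      LinearMap.mul' R R (TensorProduct.map f (conv g k) t) =
      LinearMap.mul' R R (TensorProduct.map f (LinearMap.mul' R R ∘ₗ TensorProduct.map g k)
        ((Coalgebra.comul (R := R) (A := H)).lTensor H t)) := by
    intro t
    induction t using TensorProduct.induction_on with
    | zero => simp
    | tmul a b => simp [conv_apply']
    | add u v hu hv => simp_all
  calc (conv (conv f g) k) x
      = LinearMap.mul' R R (TensorProduct.map (conv f g) k (Coalgebra.comul x)) := rfl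
    _ = LinearMap.mul' R R (TensorProduct.map (LinearMap.mul' R R ∘ₗ TensorProduct.map f g) k
        ((Coalgebra.comul (R := R) (A := H)).rTensor H (Coalgebra.comul x))) := e1 _
    _ = LinearMap.mul' R R (TensorProduct.map f (LinearMap.mul' R R ∘ₗ TensorProduct.map g k)
        (TensorProduct.assoc R H H H
          ((Coalgebra.comul (R := R) (A := H)).rTensor H (Coalgebra.comul x)))) := key _
    _ = LinearMap.mul' R R (TensorProduct.map f (LinearMap.mul' R R ∘ₗ TensorProduct.map g k)
        ((Coalgebra.comul (R := R) (A := H)).lTensor H (Coalgebra.comul x))) := by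
          rw [Coalgebra.coassoc_apply]
    _ = (conv f (conv g k)) x := (e2 _).symm

lemma one_conv (f : H →ₗ[R] R) :
    conv (Bialgebra.counitAlgHom R H).toLinearMap f = f := by
  ext x
  have e : ∀ t : H ⊗[R] H,
      LinearMap.mul' R R
        (TensorProduct.map (Bialgebra.counitAlgHom R H).toLinearMap f t) =
      LinearMap.mul' R R (f.lTensor R
        ((Coalgebra.counit (R := R) (A := H)).rTensor H t)) := by
    intro t
    induction t using TensorProduct.induction_on with
    | zero => simp
    | tmul a b => simp
    | add u v hu hv => simp_all
  calc (conv (Bialgebra.counitAlgHom R H).toLinearMap f) x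
      = LinearMap.mul' R R
          (TensorProduct.map (Bialgebra.counitAlgHom R H).toLinearMap f
            (Coalgebra.comul x)) := rfl
    _ = LinearMap.mul' R R (f.lTensor R
          ((Coalgebra.counit (R := R) (A := H)).rTensor H (Coalgebra.comul x))) := e _
    _ = f x := by rw [Coalgebra.rTensor_counit_comul]; simp

lemma conv_one (f : H →ₗ[R] R) :
    conv f (Bialgebra.counitAlgHom R H).toLinearMap = f := by
  ext x
  have e : ∀ t : H ⊗[R] H,
      LinearMap.mul' R R
        (TensorProduct.map f (Bialgebra.counitAlgHom R H).toLinearMap t) =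
      LinearMap.mul' R R (f.rTensor R
        ((Coalgebra.counit (R := R) (A := H)).lTensor H t)) := by
    intro t
    induction t using TensorProduct.induction_on with
    | zero => simp
    | tmul a b => simp [mul_comm]
    | add u v hu hv => simp_all
  calc (conv f (Bialgebra.counitAlgHom R H).toLinearMap) x
      = LinearMap.mul' R R
          (TensorProduct.map f (Bialgebra.counitAlgHom R H).toLinearMap
            (Coalgebra.comul x)) := rfl
    _ = LinearMap.mul' R R (f.rTensor R
          ((Coalgebra.counit (R := R) (A := H)).lTensor H (Coalgebra.comul x))) := e _
    _ = f x := by rw [Coalgebra.lTensor_counit_comul]; simp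

end ConvLemmas

/-- For a finite group `Φ` of weights, skew-primitive `h` with
`Δ h = g ⊗ h + h ⊗ g'`, and any `lam ∈ Φ`:
`(lam g - lam g') * Σ_Φ(h) = lam h * (Σ_Φ(g) - Σ_Φ(g'))`. -/
theorem sumPi_skewPrimitive_symmetric
    {R H : Type*} [CommRing R] [IsDomain R] [Ring H] [HopfAlgebra R H]
    (Φ : Finset (H →ₐ[R] R))
    (hone : Bialgebra.counitAlgHom R H ∈ Φ)
    (hmul : ∀ γ ∈ Φ, ∀ ν ∈ Φ, ∃ μ ∈ Φ,
      conv γ.toLinearMap ν.toLinearMap = μ.toLinearMap)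
    (hinv : ∀ γ ∈ Φ, ∃ ν ∈ Φ,
      conv γ.toLinearMap ν.toLinearMap = (Bialgebra.counitAlgHom R H).toLinearMap)
    (g g' h : H)
    (hg : Coalgebra.comul (R := R) g = g ⊗ₜ[R] g) (hgε : Coalgebra.counit (R := R) g = 1)
    (hg' : Coalgebra.comul (R := R) g' = g' ⊗ₜ[R] g') (hg'ε : Coalgebra.counit (R := R) g' = 1)
    (hh : Coalgebra.comul (R := R) h = g ⊗ₜ[R] h + h ⊗ₜ[R] g')
    (lam : H →ₐ[R] R) (hlam : lam ∈ Φ) :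
    (lam g - lam g') * (∑ γ ∈ Φ, γ h) = lam h * ((∑ γ ∈ Φ, γ g) - (∑ γ ∈ Φ, γ g')) := by
  obtain ⟨ν, hν, hlv⟩ := hinv lam hlam
  -- ν is a two-sided inverse of lam
  have hvl : conv ν.toLinearMap lam.toLinearMap = (Bialgebra.counitAlgHom R H).toLinearMap := by
    obtain ⟨ρ, hρ, hvρ⟩ := hinv ν hν
    have step : conv ν.toLinearMap lam.toLinearMap =
        conv (conv ν.toLinearMap lam.toLinearMap) (conv ν.toLinearMap ρ.toLinearMap) := by
      rw [hvρ, conv_one]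
    rw [step, ← conv_assoc, conv_assoc ν.toLinearMap, hlv, conv_one, hvρ]
  have eval_h : ∀ f k : H →ₗ[R] R, conv f k h = f g * k h + f h * k g' := by
    intro f k
    rw [conv_apply', hh]
    simp
  -- left translation invariance of the sum
  have sum_left : ∀ x : H,
      (∑ γ ∈ Φ, conv lam.toLinearMap γ.toLinearMap x) = ∑ γ ∈ Φ, γ x := by
    intro x
    refine Finset.sum_bij' (fun γ hγ => (hmul lam hlam γ hγ).choose)
      (fun γ hγ => (hmul ν hν γ hγ).choose)
      ?_ ?_ ?_ ?_ ?_
    · intro γ hγ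
      exact (hmul lam hlam γ hγ).choose_spec.1
    · intro γ hγ
      exact (hmul ν hν γ hγ).choose_spec.1
    · intro γ hγ
      apply AlgHom.toLinearMap_injective
      rw [← (hmul ν hν _ _).choose_spec.2, ← (hmul lam hlam γ hγ).choose_spec.2,
        ← conv_assoc, hvl, one_conv]
      exact (hmul lam hlam γ hγ).choose_spec.1
    · intro γ hγ
      apply AlgHom.toLinearMap_injective
      rw [← (hmul lam hlam _ _).choose_spec.2, ← (hmul ν hν γ hγ).choose_spec.2,
        ← conv_assoc, hlv, one_conv]
      exact (hmul ν hν γ hγ).choose_spec.1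
    · intro γ hγ
      exact LinearMap.congr_fun (hmul lam hlam γ hγ).choose_spec.2 x
  -- right translation invariance of the sum
  have sum_right : ∀ x : H,
      (∑ γ ∈ Φ, conv γ.toLinearMap lam.toLinearMap x) = ∑ γ ∈ Φ, γ x := by
    intro x
    refine Finset.sum_bij' (fun γ hγ => (hmul γ hγ lam hlam).choose)
      (fun γ hγ => (hmul γ hγ ν hν).choose)
      ?_ ?_ ?_ ?_ ?_
    · intro γ hγ
      exact (hmul γ hγ lam hlam).choose_spec.1
    · intro γ hγ
      exact (hmul γ hγ ν hν).choose_spec.1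
    · intro γ hγ
      apply AlgHom.toLinearMap_injective
      rw [← (hmul _ _ ν hν).choose_spec.2, ← (hmul γ hγ lam hlam).choose_spec.2,
        conv_assoc, hlv, conv_one]
      exact (hmul γ hγ lam hlam).choose_spec.1
    · intro γ hγ
      apply AlgHom.toLinearMap_injective
      rw [← (hmul _ _ lam hlam).choose_spec.2, ← (hmul γ hγ ν hν).choose_spec.2,
        conv_assoc, hvl, conv_one]
      exact (hmul γ hγ ν hν).choose_spec.1
    · intro γ hγ
      exact LinearMap.congr_fun (hmul γ hγ lam hlam).choose_spec.2 x
  have e1 : lam g * (∑ γ ∈ Φ, γ h) + lam h * (∑ γ ∈ Φ, γ g') = ∑ γ ∈ Φ, γ h := by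
    calc lam g * (∑ γ ∈ Φ, γ h) + lam h * (∑ γ ∈ Φ, γ g')
        = ∑ γ ∈ Φ, (lam g * γ h + lam h * γ g') := by
          rw [Finset.mul_sum, Finset.mul_sum, Finset.sum_add_distrib]
      _ = ∑ γ ∈ Φ, conv lam.toLinearMap γ.toLinearMap h :=
          Finset.sum_congr rfl fun γ _ => by rw [eval_h]; rfl
      _ = ∑ γ ∈ Φ, γ h := sum_left h
  have e2 : (∑ γ ∈ Φ, γ g) * lam h + (∑ γ ∈ Φ, γ h) * lam g' = ∑ γ ∈ Φ, γ h := by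
    calc (∑ γ ∈ Φ, γ g) * lam h + (∑ γ ∈ Φ, γ h) * lam g'
        = ∑ γ ∈ Φ, (γ g * lam h + γ h * lam g') := by
          rw [Finset.sum_mul, Finset.sum_mul, Finset.sum_add_distrib]
      _ = ∑ γ ∈ Φ, conv γ.toLinearMap lam.toLinearMap h :=
          Finset.sum_congr rfl fun γ _ => by rw [eval_h]; rfl
      _ = ∑ γ ∈ Φ, γ h := sum_right h
  linear_combination e1 - e2
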